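/- Abstract Céa-type estimate for penalty problems: Let H be a real Hilbert space, a a symmetric positive semi-definite bounded bilinear form, ℓ a bounded linear functional, b₁,…,b_m symmetric positive semi-definite bounded bilinear forms, X ⊆ H a closed subspace, ε₁,…,ε_m > 0, and a_ε = a + Σᵢ (1/εᵢ)bᵢ. Let u ∈ H and suppose u_ε ∈ X satisfies the variational equation a_ε(u_ε, v) = ℓ(v) + Σᵢ (1/εᵢ) bᵢ(u, v) for all v ∈ X. Suppose there exist constants cᵢ > 0 such that |a(u,v) − ℓ(v)| ≤ Σᵢ cᵢ ‖v‖_{bᵢ} for all v ∈ X. Then ‖u − u_ε‖²_{a_ε} ≤ 3 · inf_{v ∈ X} ( ‖u − v‖²_{a_ε} + Σᵢ εᵢ cᵢ² ). -/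

import Mathlib

lemma bil_sq_le {H : Type*} [AddCommGroup H] [Module ℝ H]
    (B : H →ₗ[ℝ] H →ₗ[ℝ] ℝ) (hs : ∀ v w, B v w = B w v) (hp : ∀ v, 0 ≤ B v v)
    (x y : H) : (B x y)^2 ≤ B x x * B y y := by
  have h : ∀ t : ℝ, 0 ≤ B y y * (t * t) + 2 * B x y * t + B x x := by
    intro t
    have h0 := hp (x + t • y)
    have hyx : B y x = B x y := hs y x
    simp only [map_add, map_smul, LinearMap.add_apply, LinearMap.smul_apply,
      smul_eq_mul] at h0
    rw [hyx] at h0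
    nlinarith [h0]
  have hd := discrim_le_zero h
  rw [discrim] at hd
  nlinarith [hd]

lemma bil_cs {H : Type*} [AddCommGroup H] [Module ℝ H]
    (B : H →ₗ[ℝ] H →ₗ[ℝ] ℝ) (hs : ∀ v w, B v w = B w v) (hp : ∀ v, 0 ≤ B v v)
    (x y : H) : B x y ≤ Real.sqrt (B x x) * Real.sqrt (B y y) := by
  have h := bil_sq_le B hs hp x y
  calc B x y ≤ Real.sqrt ((B x y)^2) := by
        rw [Real.sqrt_sq_eq_abs]; exact le_abs_self _
    _ ≤ Real.sqrt (B x x * B y y) := Real.sqrt_le_sqrt h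
    _ = _ := Real.sqrt_mul (hp x) _

lemma bil_tri {H : Type*} [AddCommGroup H] [Module ℝ H]
    (B : H →ₗ[ℝ] H →ₗ[ℝ] ℝ) (hs : ∀ v w, B v w = B w v) (hp : ∀ v, 0 ≤ B v v)
    (x y : H) : Real.sqrt (B (x + y) (x + y)) ≤ Real.sqrt (B x x) + Real.sqrt (B y y) := by
  have hcs := bil_cs B hs hp x y
  have hx : (Real.sqrt (B x x))^2 = B x x := Real.sq_sqrt (hp x)
  have hy : (Real.sqrt (B y y))^2 = B y y := Real.sq_sqrt (hp y)
  have hexp : B (x+y) (x+y) = B x x + 2 * B x y + B y y := by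
    have hyx := hs y x
    simp only [map_add, LinearMap.add_apply]
    linarith
  have hb : B (x+y) (x+y) ≤ (Real.sqrt (B x x) + Real.sqrt (B y y))^2 := by
    rw [hexp]; nlinarith
  calc Real.sqrt (B (x+y) (x+y))
      ≤ Real.sqrt ((Real.sqrt (B x x) + Real.sqrt (B y y))^2) := Real.sqrt_le_sqrt hb
    _ = _ := Real.sqrt_sq (by positivity)

set_option maxHeartbeats 2000000 in
/-- Abstract Céa-type estimate for penalty problems. -/
theorem stmt3 {H : Type*} [NormedAddCommGroup H] [InnerProductSpace ℝ H] [CompleteSpace H]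
    (m : ℕ) (a : H →ₗ[ℝ] H →ₗ[ℝ] ℝ) (b : Fin m → H →ₗ[ℝ] H →ₗ[ℝ] ℝ) (ℓ : H →L[ℝ] ℝ)
    (ha_symm : ∀ v w, a v w = a w v) (ha_pos : ∀ v, 0 ≤ a v v)
    (ha_bdd : ∃ C : ℝ, ∀ v w, |a v w| ≤ C * ‖v‖ * ‖w‖)
    (hb_symm : ∀ i v w, b i v w = b i w v) (hb_pos : ∀ i v, 0 ≤ b i v v)
    (hb_bdd : ∀ i, ∃ C : ℝ, ∀ v w, |b i v w| ≤ C * ‖v‖ * ‖w‖)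
    (X : Submodule ℝ H) (hX : IsClosed (X : Set H))
    (ε c : Fin m → ℝ) (hε : ∀ i, 0 < ε i) (hc : ∀ i, 0 < c i)
    (u uε : H) (huε : uε ∈ X)
    (hvar : ∀ v ∈ X, a uε v + ∑ i, (ε i)⁻¹ * b i uε v = ℓ v + ∑ i, (ε i)⁻¹ * b i u v)
    (hcapture : ∀ v ∈ X, |a u v - ℓ v| ≤ ∑ i, c i * Real.sqrt (b i v v)) :
    ∀ v ∈ X,
      a (u - uε) (u - uε) + ∑ i, (ε i)⁻¹ * b i (u - uε) (u - uε)
        ≤ 3 * ((a (u - v) (u - v) + ∑ i, (ε i)⁻¹ * b i (u - v) (u - v))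
            + ∑ i, ε i * (c i) ^ 2) := by
  intro v hv
  set Aε : H →ₗ[ℝ] H →ₗ[ℝ] ℝ := a + ∑ i, (ε i)⁻¹ • b i with hAε
  have hA_apply : ∀ x y, Aε x y = a x y + ∑ i, (ε i)⁻¹ * b i x y := by
    intro x y
    simp [hAε, LinearMap.sum_apply, LinearMap.smul_apply, smul_eq_mul]
  have hA_symm : ∀ x y, Aε x y = Aε y x := by
    intro x y
    rw [hA_apply, hA_apply, ha_symm x y]
    congr 1
    exact Finset.sum_congr rfl fun i _ => by rw [hb_symm i x y]
  have hA_pos : ∀ x, 0 ≤ Aε x x := by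
    intro x
    rw [hA_apply]
    have : 0 ≤ ∑ i, (ε i)⁻¹ * b i x x :=
      Finset.sum_nonneg fun i _ => mul_nonneg (inv_nonneg.mpr (hε i).le) (hb_pos i x)
    linarith [ha_pos x]
  set e := u - uε with he
  set dv := u - v with hdv
  set w := v - uε with hw
  have hwX : w ∈ X := X.sub_mem hv huε
  have hedw : e = dv + w := by rw [he, hdv, hw]; abel
  have hwed : w = e + -dv := by rw [he, hdv, hw]; abel
  -- Galerkin orthogonality-type identity: Aε e w = a u w - ℓ w
  have hkey : Aε e w = a u w - ℓ w := by
    have h1 := hvar w hwX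
    have : Aε e w = Aε u w - Aε uε w := by
      rw [he]; simp [map_sub]
    rw [this, hA_apply, hA_apply]
    linarith
  set D := Real.sqrt (Aε e e) with hD
  set A := Real.sqrt (Aε dv dv) with hA
  set s := Real.sqrt (∑ i, ε i * (c i)^2) with hs
  have hEnn : (0:ℝ) ≤ ∑ i, ε i * (c i)^2 :=
    Finset.sum_nonneg fun i _ => mul_nonneg (hε i).le (sq_nonneg _)
  have hD2 : D^2 = Aε e e := Real.sq_sqrt (hA_pos e)
  have hA2 : A^2 = Aε dv dv := Real.sq_sqrt (hA_pos dv)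
  have hs2 : s^2 = ∑ i, ε i * (c i)^2 := Real.sq_sqrt hEnn
  have hDnn : 0 ≤ D := Real.sqrt_nonneg _
  have hAnn : 0 ≤ A := Real.sqrt_nonneg _
  have hsnn : 0 ≤ s := Real.sqrt_nonneg _
  -- term 1
  have hT1 : Aε e dv ≤ D * A := bil_cs Aε hA_symm hA_pos e dv
  -- √(Aε w w) ≤ D + A
  have hwtri : Real.sqrt (Aε w w) ≤ D + A := by
    have h := bil_tri Aε hA_symm hA_pos e (-dv)
    have hneg : Aε (-dv) (-dv) = Aε dv dv := by simp [map_neg]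
    rw [hneg, ← hwed] at h
    exact h
  -- sum Cauchy-Schwarz
  have hsum : ∑ i, c i * Real.sqrt (b i w w) ≤ s * Real.sqrt (Aε w w) := by
    set S1 := ∑ i, (ε i)⁻¹ * b i w w with hS1
    have hS1nn : 0 ≤ S1 :=
      Finset.sum_nonneg fun i _ => mul_nonneg (inv_nonneg.mpr (hε i).le) (hb_pos i w)
    have hS1le : S1 ≤ Aε w w := by rw [hA_apply]; linarith [ha_pos w]
    have hcsq : (∑ i, c i * Real.sqrt (b i w w))^2 ≤ (∑ i, ε i * (c i)^2) * S1 := by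
      have hcs := Finset.sum_mul_sq_le_sq_mul_sq Finset.univ
        (fun i => c i * Real.sqrt (ε i))
        (fun i => Real.sqrt ((ε i)⁻¹ * b i w w))
      have heq : ∀ i : Fin m,
          c i * Real.sqrt (ε i) * Real.sqrt ((ε i)⁻¹ * b i w w)
            = c i * Real.sqrt (b i w w) := by
        intro i
        rw [Real.sqrt_mul (inv_nonneg.mpr (hε i).le), Real.sqrt_inv]
        have hne : Real.sqrt (ε i) ≠ 0 :=
          ne_of_gt (Real.sqrt_pos.mpr (hε i))
        field_simp
      have heq2 : ∀ i : Fin m, (c i * Real.sqrt (ε i))^2 = ε i * (c i)^2 := by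
        intro i
        rw [mul_pow, Real.sq_sqrt (hε i).le]; ring
      have heq3 : ∀ i : Fin m, (Real.sqrt ((ε i)⁻¹ * b i w w))^2 = (ε i)⁻¹ * b i w w := by
        intro i
        exact Real.sq_sqrt (mul_nonneg (inv_nonneg.mpr (hε i).le) (hb_pos i w))
      simp only [heq, heq2, heq3] at hcs
      exact hcs
    calc ∑ i, c i * Real.sqrt (b i w w)
        = Real.sqrt ((∑ i, c i * Real.sqrt (b i w w))^2) := by
          rw [Real.sqrt_sq (Finset.sum_nonneg fun i _ =>
            mul_nonneg (hc i).le (Real.sqrt_nonneg _))]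
      _ ≤ Real.sqrt ((∑ i, ε i * (c i)^2) * S1) := Real.sqrt_le_sqrt hcsq
      _ ≤ Real.sqrt ((∑ i, ε i * (c i)^2) * Aε w w) := by
          apply Real.sqrt_le_sqrt
          exact mul_le_mul_of_nonneg_left hS1le hEnn
      _ = s * Real.sqrt (Aε w w) := Real.sqrt_mul hEnn _
  -- term 2
  have hT2 : a u w - ℓ w ≤ s * (D + A) := by
    have h1 : a u w - ℓ w ≤ |a u w - ℓ w| := le_abs_self _
    have h2 := hcapture w hwX
    have h3 : s * Real.sqrt (Aε w w) ≤ s * (D + A) :=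
      mul_le_mul_of_nonneg_left hwtri hsnn
    linarith
  -- decomposition
  have hdec : Aε e e = Aε e dv + (a u w - ℓ w) := by
    rw [← hkey]
    have : Aε e e = Aε e (dv + w) := by rw [← hedw]
    rw [this, map_add]
  -- combine
  have hmain : D^2 ≤ D * A + s * (D + A) := by
    rw [hD2, hdec]; linarith
  have hfinal : D^2 ≤ 3 * (A^2 + s^2) := by
    nlinarith [sq_nonneg (D - 2*A), sq_nonneg (D - 2*s), sq_nonneg (A - s), hDnn, hAnn, hsnn]
  have hgoal : Aε e e ≤ 3 * (Aε dv dv + ∑ i, ε i * (c i)^2) := by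
    rw [← hD2, ← hA2, ← hs2]; linarith
  rw [hA_apply, hA_apply] at hgoal
  exact hgoal
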